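/- A neutral set of a flow on a compact metric space is isolated if and only if it is Ω-isolated. -/

import Mathlib

open Filter Topology Metric Set

variable {M : Type*} [MetricSpace M]

/-- `φ` is a continuous flow on `M`. -/
def IsFlow (φ : ℝ → M → M) : Prop :=
  Continuous (fun p : ℝ × M => φ p.1 p.2) ∧ (∀ x, φ 0 x = x) ∧
    (∀ s t : ℝ, ∀ x, φ (s + t) x = φ s (φ t x))

/-- The time-reversed flow. -/
def ReverseFlow (φ : ℝ → M → M) : ℝ → M → M := fun t x => φ (-t) x

/-- A compact set `A` is Lyapunov stable for `φ`. -/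
def LyapStable (φ : ℝ → M → M) (A : Set M) : Prop :=
  IsCompact A ∧ ∀ U : Set M, IsOpen U → A ⊆ U →
    ∃ V : Set M, IsOpen V ∧ A ⊆ V ∧ ∀ t : ℝ, 0 ≤ t → φ t '' V ⊆ U

/-- The ω-limit set of `x`: accumulation points of `φ t x` as `t → +∞`. -/
def OmegaSet (φ : ℝ → M → M) (x : M) : Set M :=
  {y | ∃ u : ℕ → ℝ, Tendsto u atTop atTop ∧ Tendsto (fun n => φ (u n) x) atTop (𝓝 y)}

/-- The α-limit set of `x`: accumulation points of `φ t x` as `t → -∞`. -/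
def AlphaSet (φ : ℝ → M → M) (x : M) : Set M :=
  {y | ∃ u : ℕ → ℝ, Tendsto u atTop atBot ∧ Tendsto (fun n => φ (u n) x) atTop (𝓝 y)}

/-- The stable set of `Λ`. -/
def StableSet (φ : ℝ → M → M) (Λ : Set M) : Set M :=
  {x | Tendsto (fun t => infDist (φ t x) Λ) atTop (𝓝 0)}

/-- The unstable set of `Λ`. -/
def UnstableSet (φ : ℝ → M → M) (Λ : Set M) : Set M :=
  {x | Tendsto (fun t => infDist (φ t x) Λ) atBot (𝓝 0)}

/-- `Λ` is invariant under the flow. -/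
def IsInvariantSet (φ : ℝ → M → M) (Λ : Set M) : Prop := ∀ t : ℝ, φ t '' Λ = Λ

/-- `Γ` is a transitive set: compact, invariant, and equal to the ω-limit set of
one of its points. -/
def IsTransitiveSet (φ : ℝ → M → M) (Γ : Set M) : Prop :=
  IsCompact Γ ∧ IsInvariantSet φ Γ ∧ ∃ x ∈ Γ, OmegaSet φ x = Γ

/-- `Λ` is neutral: a compact invariant set which is the intersection of a Lyapunov
stable set for `φ` and a Lyapunov stable set for the reversed flow. -/
def IsNeutralSet (φ : ℝ → M → M) (Λ : Set M) : Prop :=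
  IsCompact Λ ∧ IsInvariantSet φ Λ ∧
    ∃ Λp Λm : Set M, LyapStable φ Λp ∧ LyapStable (ReverseFlow φ) Λm ∧ Λ = Λp ∩ Λm

/-- The nonwandering set of the flow. -/
def NonwanderingSet (φ : ℝ → M → M) : Set M :=
  {p | ∀ W : Set M, IsOpen W → p ∈ W → ∀ T : ℝ, 0 < T → ∃ t > T, (φ t '' W ∩ W).Nonempty}

/-- `Λ` is isolated: the maximal invariant set of some compact neighborhood. -/
def IsIsolatedSet (φ : ℝ → M → M) (Λ : Set M) : Prop :=
  ∃ U : Set M, IsCompact U ∧ Λ ⊆ interior U ∧ (⋂ t : ℝ, φ t '' U) = Λ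

/-- `Λ` is Ω-isolated: `Ω(φ) \ Λ` is closed. -/
def IsOmegaIsolatedSet (φ : ℝ → M → M) (Λ : Set M) : Prop :=
  IsClosed (NonwanderingSet φ \ Λ)


lemma flow_cont (φ : ℝ → M → M) (hφ : IsFlow φ) (t : ℝ) : Continuous (φ t) :=
  hφ.1.comp (Continuous.prodMk_right t)

lemma flow_cancel (φ : ℝ → M → M) (hφ : IsFlow φ) (t : ℝ) (x : M) :
    φ t (φ (-t) x) = x := by
  rw [← hφ.2.2]; simp [hφ.2.1]

lemma flow_cancel' (φ : ℝ → M → M) (hφ : IsFlow φ) (t : ℝ) (x : M) :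
    φ (-t) (φ t x) = x := by
  rw [← hφ.2.2]; simp [hφ.2.1]

lemma flow_mem_image (φ : ℝ → M → M) (hφ : IsFlow φ) (t : ℝ) (S : Set M) (x : M) :
    x ∈ φ t '' S ↔ φ (-t) x ∈ S := by
  constructor
  · rintro ⟨w, hw, rfl⟩
    rwa [flow_cancel' φ hφ]
  · intro h
    exact ⟨φ (-t) x, h, flow_cancel φ hφ t x⟩

lemma nonwandering_closed (φ : ℝ → M → M) : IsClosed (NonwanderingSet φ) := by
  rw [← isOpen_compl_iff, isOpen_iff_forall_mem_open]
  intro p hp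
  simp only [mem_compl_iff, NonwanderingSet, mem_setOf_eq] at hp
  push_neg at hp
  obtain ⟨W, hWo, hpW, T, hT, hno⟩ := hp
  refine ⟨W, fun q hq => ?_, hWo, hpW⟩
  simp only [mem_compl_iff, NonwanderingSet, mem_setOf_eq]
  push_neg
  exact ⟨W, hWo, hq, T, hT, hno⟩

lemma mem_nonwandering_of_limit (φ : ℝ → M → M) (hφ : IsFlow φ) (x z : M) (u : ℕ → ℝ)
    (hconv : Tendsto (fun n => φ (u n) x) atTop (𝓝 z))
    (hgap : ∀ C : ℝ, ∀ m : ℕ, ∃ k ≥ m, ∃ l ≥ m, u k - u l > C) :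
    z ∈ NonwanderingSet φ := by
  intro W hWo hzW T hT
  have hev : ∀ᶠ n in atTop, φ (u n) x ∈ W := hconv.eventually (hWo.mem_nhds hzW)
  obtain ⟨m, hm⟩ := hev.exists_forall_of_atTop
  obtain ⟨k, hk, l, hl, hkl⟩ := hgap T m
  refine ⟨u k - u l, hkl, φ (u k) x, ⟨φ (u l) x, hm l hl, ?_⟩, hm k hk⟩
  rw [← hφ.2.2]; ring_nf

theorem neutral_isolated_iff_omega_isolated [CompactSpace M] (φ : ℝ → M → M)
    (hφ : IsFlow φ) (Λ : Set M) (hΛ : IsNeutralSet φ Λ) :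
    IsIsolatedSet φ Λ ↔ IsOmegaIsolatedSet φ Λ := by
  obtain ⟨hΛc, hΛinv, Λp, Λm, ⟨hΛpc, hΛpst⟩, ⟨hΛmc, hΛmst⟩, hΛeq⟩ := hΛ
  constructor
  · rintro ⟨U, hUc, hUint, hUiso⟩
    -- Step 1: find open A ⊇ Λp, B ⊇ Λm with A ∩ B ⊆ interior U
    have step1 : ∃ A B : Set M, IsOpen A ∧ IsOpen B ∧ Λp ⊆ A ∧ Λm ⊆ B ∧
        A ∩ B ⊆ interior U := by
      by_contra h
      push_neg at h
      have hz : ∀ n : ℕ, ∃ z : M, z ∈ thickening ((n : ℝ) + 1)⁻¹ Λp ∧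
          z ∈ thickening ((n : ℝ) + 1)⁻¹ Λm ∧ z ∉ interior U := by
        intro n
        have hpos : (0 : ℝ) < ((n : ℝ) + 1)⁻¹ := by positivity
        have := h (thickening ((n : ℝ) + 1)⁻¹ Λp) (thickening ((n : ℝ) + 1)⁻¹ Λm)
          isOpen_thickening isOpen_thickening
          (self_subset_thickening hpos _) (self_subset_thickening hpos _)
        rw [Set.not_subset] at this
        obtain ⟨z, hz1, hz2⟩ := this
        exact ⟨z, hz1.1, hz1.2, hz2⟩
      choose z hz1 hz2 hz3 using hz
      obtain ⟨w, -, ψ, hψ, hwt⟩ := isCompact_univ.tendsto_subseq (fun n => mem_univ (z n))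
      have hinv : Tendsto (fun k : ℕ => ((k : ℝ) + 1)⁻¹) atTop (𝓝 0) := by
        have := tendsto_one_div_add_atTop_nhds_zero_nat (𝕜 := ℝ)
        simpa [one_div] using this
      have hmem : ∀ (S : Set M), (∀ n : ℕ, z n ∈ thickening ((n : ℝ) + 1)⁻¹ S) →
          w ∈ closure S := by
        intro S hS
        have hconv : Tendsto (fun k => infDist (z (ψ k)) S) atTop (𝓝 (infDist w S)) :=
          ((continuous_infDist_pt S).tendsto w).comp hwt
        have hle : ∀ k : ℕ, infDist (z (ψ k)) S ≤ ((k : ℝ) + 1)⁻¹ := by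
          intro k
          obtain ⟨y, hy, hd⟩ := mem_thickening_iff.mp (hS (ψ k))
          have h1 : infDist (z (ψ k)) S ≤ dist (z (ψ k)) y := infDist_le_dist_of_mem hy
          have h2 : ((ψ k : ℝ) + 1)⁻¹ ≤ ((k : ℝ) + 1)⁻¹ := by
            apply inv_anti₀ (by positivity)
            have h0 : k ≤ ψ k := hψ.le_apply (x := k)
            have h0' : (k : ℝ) ≤ (ψ k : ℝ) := by exact_mod_cast h0
            linarith
          linarith
        have hzero : infDist w S ≤ 0 :=
          le_of_tendsto_of_tendsto' hconv hinv hle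
        have : infDist w S = 0 := le_antisymm hzero infDist_nonneg
        have hne : S.Nonempty := by
          obtain ⟨y, hy, -⟩ := mem_thickening_iff.mp (hS 0)
          exact ⟨y, hy⟩
        exact (mem_closure_iff_infDist_zero hne).mpr this
      have hwp : w ∈ Λp := by
        have := hmem Λp hz1
        rwa [hΛpc.isClosed.closure_eq] at this
      have hwm : w ∈ Λm := by
        have := hmem Λm hz2
        rwa [hΛmc.isClosed.closure_eq] at this
      have hwU : w ∈ interior U := hUint (hΛeq ▸ (⟨hwp, hwm⟩ : w ∈ Λp ∩ Λm))
      have hwU' : w ∈ (interior U)ᶜ :=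
        isOpen_interior.isClosed_compl.mem_of_tendsto hwt
          (Eventually.of_forall fun k => hz3 (ψ k))
      exact hwU' hwU
    obtain ⟨A, B, hAo, hBo, hpA, hmB, hABU⟩ := step1
    obtain ⟨Vp, hVpo, hVps, hVp⟩ := hΛpst A hAo hpA
    obtain ⟨Vm, hVmo, hVms, hVm⟩ := hΛmst B hBo hmB
    -- Key: nonwandering points in Vp ∩ Vm lie in Λ
    have key : ∀ p ∈ NonwanderingSet φ, p ∈ Vp → p ∈ Vm → p ∈ Λ := by
      intro p hpΩ hpVp hpVm
      by_contra hpΛ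
      rw [← hUiso, mem_iInter] at hpΛ
      push_neg at hpΛ
      obtain ⟨t₀, ht₀⟩ := hpΛ
      rw [flow_mem_image φ hφ] at ht₀
      set s := -t₀ with hs
      rcases le_or_gt 0 s with hsle | hslt
      · set W := (Vp ∩ Vm) ∩ (φ s) ⁻¹' Uᶜ with hW
        have hWo : IsOpen W :=
          (hVpo.inter hVmo).inter (hUc.isClosed.isOpen_compl.preimage (flow_cont φ hφ s))
        have hpW : p ∈ W := ⟨⟨hpVp, hpVm⟩, ht₀⟩
        obtain ⟨t, htT, y, ⟨wpt, hwW, hwy⟩, hyW⟩ := hpΩ W hWo hpW (s + 1) (by linarith)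
        have h1 : φ s wpt ∈ A := hVp s hsle ⟨wpt, hwW.1.1, rfl⟩
        have h2 : φ s wpt ∈ B := by
          have hb : ReverseFlow φ (t - s) '' Vm ⊆ B := hVm (t - s) (by linarith)
          have e1 : φ (-(t - s)) y = φ s wpt := by
            rw [← hwy, ← hφ.2.2]; congr 1; ring
          rw [← e1]
          exact hb ⟨y, hyW.1.2, rfl⟩
        exact hwW.2 (interior_subset (hABU ⟨h1, h2⟩))
      · set W := (Vp ∩ Vm) ∩ (φ s) ⁻¹' Uᶜ with hW
        have hWo : IsOpen W :=
          (hVpo.inter hVmo).inter (hUc.isClosed.isOpen_compl.preimage (flow_cont φ hφ s))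
        have hpW : p ∈ W := ⟨⟨hpVp, hpVm⟩, ht₀⟩
        obtain ⟨t, htT, y, ⟨wpt, hwW, hwy⟩, hyW⟩ := hpΩ W hWo hpW (-s + 1) (by linarith)
        have h2 : φ s y ∈ B := by
          have hb : ReverseFlow φ (-s) '' Vm ⊆ B := hVm (-s) (by linarith)
          have := hb ⟨y, hyW.1.2, rfl⟩
          simpa [ReverseFlow, neg_neg] using this
        have h1 : φ s y ∈ A := by
          have e1 : φ s y = φ (s + t) wpt := by
            rw [← hwy, ← hφ.2.2]
          rw [e1]
          exact hVp (s + t) (by linarith) ⟨wpt, hwW.1.1, rfl⟩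
        exact hyW.2 (interior_subset (hABU ⟨h1, h2⟩))
    -- conclude: Ω \ Λ is closed
    apply isClosed_of_closure_subset
    intro x hx
    have hxΩ : x ∈ NonwanderingSet φ := by
      have h1 : closure (NonwanderingSet φ \ Λ) ⊆ closure (NonwanderingSet φ) :=
        closure_mono diff_subset
      have h2 := h1 hx
      rwa [(nonwandering_closed φ).closure_eq] at h2
    have hxΛ : x ∉ Λ := by
      intro hxΛ
      have hxV : x ∈ Vp ∩ Vm := by
        have : x ∈ Λp ∩ Λm := hΛeq ▸ hxΛ
        exact ⟨hVps this.1, hVms this.2⟩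
      obtain ⟨p, hp1, hp2⟩ := mem_closure_iff.mp hx (Vp ∩ Vm) (hVpo.inter hVmo) hxV
      exact hp2.2 (key p hp2.1 hp1.1 hp1.2)
    exact ⟨hxΩ, hxΛ⟩
  · intro hcl
    have hWo : IsOpen (NonwanderingSet φ \ Λ)ᶜ := hcl.isOpen_compl
    have hΛW : Λ ⊆ (NonwanderingSet φ \ Λ)ᶜ := fun x hx hmem => hmem.2 hx
    obtain ⟨r, hr, hrthick⟩ := hΛc.exists_thickening_subset_open hWo hΛW
    set N := cthickening (r / 2) Λ with hN
    have hNcl : IsClosed N := isClosed_cthickening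
    have hNc : IsCompact N := hNcl.isCompact
    have hNW : N ⊆ (NonwanderingSet φ \ Λ)ᶜ :=
      (cthickening_subset_thickening' hr (by linarith) Λ).trans hrthick
    refine ⟨N, hNc, ?_, ?_⟩
    · exact (self_subset_thickening (by linarith) Λ).trans
        (interior_maximal (thickening_subset_cthickening _ _) isOpen_thickening)
    · apply Subset.antisymm
      · intro x hx
        rw [mem_iInter] at hx
        have hxN : ∀ t : ℝ, φ t x ∈ N := by
          intro t
          have := hx (-t)
          rwa [flow_mem_image φ hφ, neg_neg] at this
        have hlim : ∀ (zz : M) (c : ℕ → ℝ), Tendsto (fun n => φ (c n) x) atTop (𝓝 zz) →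
            (∀ C : ℝ, ∀ m : ℕ, ∃ k ≥ m, ∃ l ≥ m, c k - c l > C) → zz ∈ Λ := by
          intro zz c hc hg
          have hzΩ := mem_nonwandering_of_limit φ hφ x zz c hc hg
          have hzN : zz ∈ N := hNcl.mem_of_tendsto hc
            (Eventually.of_forall fun n => hxN (c n))
          by_contra hzΛ
          exact hNW hzN ⟨hzΩ, hzΛ⟩
        -- backward limit point
        obtain ⟨zb, hzbN, ψb, hψb, hψbt⟩ :=
          hNc.tendsto_subseq (x := fun n : ℕ => φ (-(n : ℝ)) x) (fun n => hxN (-(n : ℝ)))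
        have hψbt' : Tendsto (fun k => φ (-((ψb k : ℕ) : ℝ)) x) atTop (𝓝 zb) := hψbt
        have hzbΛ : zb ∈ Λ := by
          apply hlim zb (fun k => -((ψb k : ℕ) : ℝ)) hψbt'
          intro C m
          refine ⟨m, le_refl m, m + ψb m + (⌈C⌉₊ + 1), by omega, ?_⟩
          have h1 : (m + ψb m + (⌈C⌉₊ + 1) : ℕ) ≤ ψb (m + ψb m + (⌈C⌉₊ + 1)) :=
            hψb.le_apply
          have h2 : C ≤ (⌈C⌉₊ : ℝ) := Nat.le_ceil C
          have h3 : ((m + ψb m + (⌈C⌉₊ + 1) : ℕ) : ℝ) ≤ (ψb (m + ψb m + (⌈C⌉₊ + 1)) : ℝ) := by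
            exact_mod_cast h1
          push_cast at h3
          linarith
        -- forward limit point
        obtain ⟨zf, hzfN, ψf, hψf, hψft⟩ :=
          hNc.tendsto_subseq (x := fun n : ℕ => φ (n : ℝ) x) (fun n => hxN (n : ℝ))
        have hψft' : Tendsto (fun k => φ ((ψf k : ℕ) : ℝ) x) atTop (𝓝 zf) := hψft
        have hzfΛ : zf ∈ Λ := by
          apply hlim zf (fun k => ((ψf k : ℕ) : ℝ)) hψft'
          intro C m
          refine ⟨m + ψf m + (⌈C⌉₊ + 1), by omega, m, le_refl m, ?_⟩
          have h1 : (m + ψf m + (⌈C⌉₊ + 1) : ℕ) ≤ ψf (m + ψf m + (⌈C⌉₊ + 1)) :=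
            hψf.le_apply
          have h2 : C ≤ (⌈C⌉₊ : ℝ) := Nat.le_ceil C
          have h3 : ((m + ψf m + (⌈C⌉₊ + 1) : ℕ) : ℝ) ≤ (ψf (m + ψf m + (⌈C⌉₊ + 1)) : ℝ) := by
            exact_mod_cast h1
          push_cast at h3
          linarith
        have hxΛp : x ∈ Λp := by
          have hcl' : x ∈ closure Λp := by
            rw [Metric.mem_closure_iff]
            intro ε hε
            obtain ⟨Vp, hVpo, hVps, hVp⟩ := hΛpst (thickening ε Λp) isOpen_thickening
              (self_subset_thickening hε Λp)
            have hzbVp : zb ∈ Vp := hVps (hΛeq ▸ hzbΛ : zb ∈ Λp ∩ Λm).1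
            obtain ⟨k, hk⟩ := (hψbt'.eventually (hVpo.mem_nhds hzbVp)).exists
            have hxU : x ∈ thickening ε Λp := by
              have := hVp ((ψb k : ℕ) : ℝ) (by positivity) ⟨_, hk, rfl⟩
              rwa [flow_cancel φ hφ] at this
            obtain ⟨y, hy, hd⟩ := mem_thickening_iff.mp hxU
            exact ⟨y, hy, hd⟩
          rwa [hΛpc.isClosed.closure_eq] at hcl'
        have hxΛm : x ∈ Λm := by
          have hcl' : x ∈ closure Λm := by
            rw [Metric.mem_closure_iff]
            intro ε hε
            obtain ⟨Vm, hVmo, hVms, hVm⟩ := hΛmst (thickening ε Λm) isOpen_thickening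
              (self_subset_thickening hε Λm)
            have hzfVm : zf ∈ Vm := hVms (hΛeq ▸ hzfΛ : zf ∈ Λp ∩ Λm).2
            obtain ⟨k, hk⟩ := (hψft'.eventually (hVmo.mem_nhds hzfVm)).exists
            have hxU : x ∈ thickening ε Λm := by
              have := hVm ((ψf k : ℕ) : ℝ) (by positivity) ⟨_, hk, rfl⟩
              simp only [ReverseFlow] at this
              rwa [flow_cancel' φ hφ] at this
            obtain ⟨y, hy, hd⟩ := mem_thickening_iff.mp hxU
            exact ⟨y, hy, hd⟩
          rwa [hΛmc.isClosed.closure_eq] at hcl'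
        rw [hΛeq]
        exact ⟨hxΛp, hxΛm⟩
      · intro x hx
        rw [mem_iInter]
        intro t
        have h1 : x ∈ φ t '' Λ := by rw [hΛinv t]; exact hx
        exact image_mono (self_subset_cthickening Λ) h1
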